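/- Let q be a prime power with q ≥ 3 (more generally any finite field with |F_q| ≥ 3). For odd n = 2m+1 ≥ 3, the number of orbits of the group PGL_2(F_q) acting diagonally on the set C_n of n-tuples of points of P^1(F_q) with cyclically adjacent points distinct is [m]_{q^2} = (q^{2m}-1)/(q^2-1). -/

import Mathlib

open Finset
open scoped LinearAlgebra.Projectivization

/-- The cyclic successor of `i : Fin n`. -/
def cycSucc {n : ℕ} (i : Fin n) : Fin n := ⟨(i.1 + 1) % n, Nat.mod_lt _ i.pos⟩

/-- Cyclic configurations of `n` points of `ℙ¹(K)` with cyclically adjacent points distinct. -/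
def cycConfig (K : Type*) [Field K] (n : ℕ) : Set (Fin n → ℙ K (Fin 2 → K)) :=
  {v | ∀ i, v i ≠ v (cycSucc i)}

/-- Two cyclic configurations are related iff some projective linear transformation
(induced by a linear automorphism of `K²`, i.e. an element of `PGL₂(K)`) maps one
to the other. -/
def pglRel (K : Type*) [Field K] (n : ℕ) (x y : cycConfig K n) : Prop :=
  ∃ g : (Fin 2 → K) ≃ₗ[K] (Fin 2 → K),
    ∀ i, Projectivization.map g.toLinearMap g.injective ((x : Fin n → ℙ K (Fin 2 → K)) i)
      = (y : Fin n → ℙ K (Fin 2 → K)) i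


open Module

section Counting

variable (X : Type*) [Fintype X]


open Classical in
/-- Number of "paths": tuples of length `n+1` with adjacent entries distinct. -/
noncomputable def pathCount (n : ℕ) : ℕ :=
  Nat.card {v : Fin (n+1) → X // ∀ i : Fin n, v i.castSucc ≠ v i.succ}

/-- Number of cyclic configurations. -/
noncomputable def cycCount (n : ℕ) : ℕ :=
  Nat.card {v : Fin n → X // ∀ i, v i ≠ v (cycSucc i)}

lemma pathCount_zero : pathCount X 0 = Fintype.card X := by
  rw [pathCount]
  have e : {v : Fin 1 → X // ∀ i : Fin 0, v i.castSucc ≠ v i.succ} ≃ X :=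
    { toFun := fun v => v.1 0
      invFun := fun x => ⟨fun _ => x, fun i => i.elim0⟩
      left_inv := fun v => Subtype.ext (funext fun i => by rw [Subsingleton.elim i 0])
      right_inv := fun x => rfl }
  rw [Nat.card_congr e, Nat.card_eq_fintype_card]

lemma pathCount_succ (n : ℕ) :
    pathCount X (n+1) = pathCount X n * (Fintype.card X - 1) := by
  classical
  have e : {v : Fin (n+2) → X // ∀ i : Fin (n+1), v i.castSucc ≠ v i.succ} ≃
      Σ w : {v : Fin (n+1) → X // ∀ i : Fin n, v i.castSucc ≠ v i.succ},
        {x : X // x ≠ w.1 (Fin.last n)} :=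
    { toFun := fun v => ⟨⟨Fin.init v.1, fun i => by
        have := v.2 i.castSucc
        simp only [Fin.init]
        rw [← Fin.succ_castSucc]
        exact this⟩,
        ⟨v.1 (Fin.last (n+1)), by
          have := v.2 (Fin.last n)
          simp only [Fin.init]
          intro h
          exact this (by rw [Fin.succ_last] at *; exact h.symm)⟩⟩
      invFun := fun ⟨w, x⟩ => ⟨Fin.snoc w.1 x.1, fun i => by
        refine Fin.lastCases ?_ (fun j => ?_) i
        · simp only [Fin.snoc_castSucc, Fin.succ_last, Fin.snoc_last]
          exact fun h => x.2 (h.symm)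
        · rw [Fin.succ_castSucc]
          simp only [Fin.snoc_castSucc]
          exact w.2 j⟩
      left_inv := fun v => Subtype.ext (Fin.snoc_init_self v.1)
      right_inv := fun p => by
        obtain ⟨w, x⟩ := p
        have h1 : Fin.init (Fin.snoc w.1 x.1 : Fin (n+2) → X) = w.1 := by simp
        refine Sigma.ext (Subtype.ext h1) ?_
        refine (Subtype.heq_iff_coe_eq fun y => by simp only [h1]).mpr ?_
        simp }
  haveI : ∀ (p : Prop), Decidable p := Classical.propDecidable
  rw [pathCount, pathCount, Nat.card_congr e, Nat.card_eq_fintype_card,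
    Nat.card_eq_fintype_card, Fintype.card_sigma]
  have : ∀ w : {v : Fin (n+1) → X // ∀ i : Fin n, v i.castSucc ≠ v i.succ},
      Fintype.card {x : X // x ≠ w.1 (Fin.last n)} = Fintype.card X - 1 := by
    intro w
    rw [Fintype.card_subtype_compl, Fintype.card_subtype_eq]
  simp only [this, Finset.sum_const, smul_eq_mul, Finset.card_univ]


lemma pathCount_eq (n : ℕ) :
    pathCount X n = Fintype.card X * (Fintype.card X - 1) ^ n := by
  induction n with
  | zero => simp [pathCount_zero]
  | succ n ih => rw [pathCount_succ, ih, pow_succ, mul_assoc]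

lemma cycSucc_of_lt {n : ℕ} (i : Fin n) (h : i.1 + 1 < n) : cycSucc i = ⟨i.1 + 1, h⟩ :=
  Fin.ext (Nat.mod_eq_of_lt h)

lemma cycSucc_of_eq {n : ℕ} (i : Fin n) (h : i.1 + 1 = n) : cycSucc i = ⟨0, i.pos⟩ :=
  Fin.ext (by simp [cycSucc, h])

lemma cycCount_one : cycCount X 1 = 0 := by
  rw [cycCount, Nat.card_eq_zero]
  left
  constructor
  rintro ⟨v, hv⟩
  exact hv 0 (congrArg v (Subsingleton.elim _ _))

lemma pathCount_split (n : ℕ) (hn : 1 ≤ n) :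
    pathCount X n = cycCount X (n + 1) + cycCount X n := by
  classical
  haveI : ∀ (p : Prop), Decidable p := Classical.propDecidable
  set P := fun v : Fin (n+1) → X => ∀ i : Fin n, v i.castSucc ≠ v i.succ with hP
  have key : {v : Fin (n+1) → X // P v} ≃
      {v : Fin (n+1) → X // ∀ i, v i ≠ v (cycSucc i)} ⊕ {w : Fin n → X // ∀ i, w i ≠ w (cycSucc i)} := by
    refine (Equiv.sumCompl (p := fun v : {v : Fin (n+1) → X // P v} =>
      v.1 (Fin.last n) ≠ v.1 0)).symm.trans (Equiv.sumCongr ?_ ?_)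
    · refine (Equiv.subtypeSubtypeEquivSubtypeInter P (fun v => v (Fin.last n) ≠ v 0)).trans (Equiv.subtypeEquivRight ?_)
      intro v
      constructor
      · rintro ⟨h1, h2⟩ i
        refine Fin.lastCases ?_ (fun j => ?_) i
        · rwa [cycSucc_of_eq (Fin.last n) (by simp)]
        · rw [cycSucc_of_lt j.castSucc (by simpa using j.2)]
          exact h1 j
      · intro h
        refine ⟨fun j => ?_, ?_⟩
        · have := h j.castSucc
          rwa [cycSucc_of_lt j.castSucc (by simpa using j.2)] at this
        · have := h (Fin.last n)
          rwa [cycSucc_of_eq (Fin.last n) (by simp)] at this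
    · refine (Equiv.subtypeSubtypeEquivSubtypeInter P (fun v => ¬(v (Fin.last n) ≠ v 0))).trans ?_
      refine { toFun := fun v => ⟨Fin.init v.1, ?_⟩
               invFun := fun w => ⟨Fin.snoc w.1 (w.1 ⟨0, hn⟩), ?_, ?_⟩
               left_inv := ?_, right_inv := ?_ }
      · intro i
        obtain ⟨v, h1, h2⟩ := v
        rw [not_not] at h2
        simp only [Fin.init]
        rcases lt_or_eq_of_le (Nat.succ_le_of_lt i.2) with h | h
        · rw [cycSucc_of_lt i h,
            show ((⟨i.1+1, h⟩ : Fin n).castSucc) = i.succ from Fin.ext rfl]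
          exact h1 i
        · rw [cycSucc_of_eq i h,
            show ((⟨0, i.pos⟩ : Fin n).castSucc) = (0 : Fin (n+1)) from Fin.ext (by simp),
            ← h2, ← show i.succ = Fin.last n from Fin.ext (by simpa using h)]
          exact h1 i
      · intro i
        obtain ⟨w, hw⟩ := w
        rcases lt_or_eq_of_le (Nat.succ_le_of_lt i.2) with h | h
        · rw [show (i.succ : Fin (n+1)) = ((⟨i.1+1, h⟩ : Fin n).castSucc) from Fin.ext rfl]
          simp only [Fin.snoc_castSucc]
          have := hw i
          rwa [cycSucc_of_lt i h] at this
        · rw [show (i.succ : Fin (n+1)) = Fin.last n from Fin.ext (by simpa using h)]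
          simp only [Fin.snoc_castSucc, Fin.snoc_last]
          have := hw i
          rwa [cycSucc_of_eq i h] at this
      · intro hne
        apply hne
        rw [show (0 : Fin (n+1)) = ((⟨0, hn⟩ : Fin n).castSucc) from Fin.ext (by simp)]
        simp only [Fin.snoc_castSucc, Fin.snoc_last]
      · intro v
        obtain ⟨v, h1, h2⟩ := v
        rw [not_not] at h2
        apply Subtype.ext
        show Fin.snoc (Fin.init v) (Fin.init v ⟨0, hn⟩) = v
        have h3 : Fin.init v ⟨0, hn⟩ = v (Fin.last n) := by
          rw [h2]
          exact congrArg v (Fin.ext (by simp))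
        rw [h3, Fin.snoc_init_self]
      · intro w
        have h1 : Fin.init (Fin.snoc w.1 (w.1 ⟨0, hn⟩) : Fin (n+1) → X) = w.1 := by simp
        exact Subtype.ext h1
  rw [pathCount, cycCount, cycCount, Nat.card_congr key, Nat.card_sum]

lemma cycCount_formula (hX : 1 ≤ Fintype.card X) (m : ℕ) :
    (cycCount X (2*m+1) : ℤ) = ((Fintype.card X : ℤ) - 1)^(2*m+1) - ((Fintype.card X : ℤ) - 1) ∧
    (cycCount X (2*m+2) : ℤ) = ((Fintype.card X : ℤ) - 1)^(2*m+2) + ((Fintype.card X : ℤ) - 1) := by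
  set k : ℤ := (Fintype.card X : ℤ) with hk
  have hpath : ∀ n, (pathCount X n : ℤ) = k * (k-1)^n := by
    intro n
    rw [pathCount_eq]
    push_cast [Nat.cast_sub hX]
    ring
  have hsplit : ∀ n, 1 ≤ n → (cycCount X (n+1) : ℤ) = k * (k-1)^n - cycCount X n := by
    intro n hn
    have h := congrArg (Nat.cast : ℕ → ℤ) (pathCount_split X n hn)
    push_cast at h
    rw [hpath] at h
    linarith
  induction m with
  | zero =>
    constructor
    · rw [show 2*0+1 = 1 by ring, cycCount_one]
      push_cast
      ring
    · rw [show 2*0+2 = 1+1 by ring, hsplit 1 le_rfl, cycCount_one]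
      push_cast
      ring
  | succ m ih =>
    obtain ⟨ih1, ih2⟩ := ih
    have h3 : (cycCount X (2*m+3) : ℤ) = (k-1)^(2*m+3) - (k-1) := by
      rw [show 2*m+3 = (2*m+2)+1 by ring, hsplit (2*m+2) (by omega), ih2]
      ring
    constructor
    · rw [show 2*(m+1)+1 = 2*m+3 by ring]
      exact h3
    · rw [show 2*(m+1)+2 = (2*m+3)+1 by ring, hsplit (2*m+3) (by omega), h3]
      ring

lemma cycCount_odd (hX : 1 ≤ Fintype.card X) (m : ℕ) :
    (cycCount X (2*m+1) : ℤ) =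
      ((Fintype.card X : ℤ) - 1)^(2*m+1) - ((Fintype.card X : ℤ) - 1) :=
  (cycCount_formula X hX m).1

end Counting


section Proj
variable (K V : Type*) [Field K] [AddCommGroup V] [Module K V]

noncomputable def projCountEquiv : (ℙ K V) × Kˣ ≃ {v : V // v ≠ 0} := by
  refine Equiv.ofBijective (fun pa => ⟨(pa.2 : K) • pa.1.rep,
    smul_ne_zero (Units.ne_zero pa.2) pa.1.rep_nonzero⟩) ⟨?_, ?_⟩
  · rintro ⟨p, a⟩ ⟨q, b⟩ h
    rw [Subtype.ext_iff] at h
    have hpq : p = q := by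
      have h1 : Projectivization.mk K ((a : K) • p.rep)
          (smul_ne_zero (Units.ne_zero a) p.rep_nonzero) = p := by
        conv_rhs => rw [← p.mk_rep]
        rw [Projectivization.mk_eq_mk_iff]
        exact ⟨a, rfl⟩
      have h2 : Projectivization.mk K ((b : K) • q.rep)
          (smul_ne_zero (Units.ne_zero b) q.rep_nonzero) = q := by
        conv_rhs => rw [← q.mk_rep]
        rw [Projectivization.mk_eq_mk_iff]
        exact ⟨b, rfl⟩
      rw [← h1, ← h2]
      congr 1
    subst hpq
    have : (a : K) = (b : K) := smul_left_injective K p.rep_nonzero h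
    exact Prod.ext rfl (Units.ext this)
  · rintro ⟨x, hx⟩
    have h1 : Projectivization.mk K x hx = Projectivization.mk K
        (Projectivization.mk K x hx).rep (Projectivization.rep_nonzero _) :=
      (Projectivization.mk_rep _).symm
    obtain ⟨a, ha⟩ := (Projectivization.mk_eq_mk_iff K _ _ hx
      (Projectivization.rep_nonzero _)).mp h1
    exact ⟨(Projectivization.mk K x hx, a), Subtype.ext ha⟩

lemma card_nonzero_eq [Fintype K] [Finite V] :
    Nat.card (ℙ K V) * (Fintype.card K - 1) = Nat.card V - 1 := by
  have h := Nat.card_congr (projCountEquiv K V)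
  rw [Nat.card_prod] at h
  have h2 : Nat.card Kˣ = Fintype.card K - 1 := by
    rw [Nat.card_units, Nat.card_eq_fintype_card]
  have h3 : Nat.card {v : V // v ≠ 0} = Nat.card V - 1 := by
    haveI := Fintype.ofFinite V
    haveI : ∀ (p : Prop), Decidable p := Classical.propDecidable
    rw [Nat.card_eq_fintype_card, Nat.card_eq_fintype_card]
    rw [Fintype.card_subtype_compl (p := fun v : V => v = 0), Fintype.card_subtype_eq]
  rw [h2, h3] at h
  exact h

lemma card_proj_line [Fintype K] :
    Nat.card (ℙ K (Fin 2 → K)) = Fintype.card K + 1 := by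
  have h := card_nonzero_eq K (Fin 2 → K)
  have hq : 2 ≤ Fintype.card K := Fintype.one_lt_card
  set q := Fintype.card K with hqdef
  have hcV : Nat.card (Fin 2 → K) = q ^ 2 := by
    rw [Nat.card_eq_fintype_card, Fintype.card_fun]
    simp
    rfl
  rw [hcV] at h
  have key : (q + 1) * (q - 1) = q ^ 2 - 1 := by
    obtain ⟨r, hr⟩ := Nat.exists_eq_add_of_le hq
    rw [hr]
    have : (2 + r) ^ 2 = (2 + r + 1) * (2 + r - 1) + 1 := by
      rw [show 2 + r - 1 = r + 1 by omega]
      ring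
    omega
  have hpos : 0 < q - 1 := by omega
  refine Nat.eq_of_mul_eq_mul_right hpos ?_
  rw [h, key]

end Proj


section Scalar
variable {K : Type*} [Field K]

lemma eig_of_fixed (g : (Fin 2 → K) ≃ₗ[K] (Fin 2 → K)) (p : ℙ K (Fin 2 → K))
    (hp : Projectivization.map g.toLinearMap g.injective p = p) :
    ∃ a : Kˣ, (a : K) • p.rep = g p.rep := by
  have hrep : g p.rep ≠ 0 := fun h => p.rep_nonzero (by simpa using g.map_eq_zero_iff.mp (by simpa using h))
  have h1 : Projectivization.mk K (g p.rep) hrep = Projectivization.mk K p.rep p.rep_nonzero := by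
    have h0 := Projectivization.map_mk g.toLinearMap g.injective p.rep p.rep_nonzero
    rw [p.mk_rep, hp] at h0
    exact h0.symm.trans p.mk_rep.symm
  have h2 := (Projectivization.mk_eq_mk_iff K _ _ hrep p.rep_nonzero).mp h1
  obtain ⟨a, ha⟩ := h2
  exact ⟨a, by rw [← ha]; rfl⟩

lemma li_of_ne (p q : ℙ K (Fin 2 → K)) (hpq : p ≠ q) :
    LinearIndependent K ![p.rep, q.rep] := by
  rw [LinearIndependent.pair_iff' p.rep_nonzero]
  intro a ha
  apply hpq
  rw [← p.mk_rep, ← q.mk_rep]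
  exact ((Projectivization.mk_eq_mk_iff' K _ _ q.rep_nonzero p.rep_nonzero).mpr ⟨a, ha⟩).symm

lemma fixes_three_scalar (g : (Fin 2 → K) ≃ₗ[K] (Fin 2 → K))
    (p₁ p₂ p₃ : ℙ K (Fin 2 → K)) (h12 : p₁ ≠ p₂) (h13 : p₁ ≠ p₃) (h23 : p₂ ≠ p₃)
    (f₁ : Projectivization.map g.toLinearMap g.injective p₁ = p₁)
    (f₂ : Projectivization.map g.toLinearMap g.injective p₂ = p₂)
    (f₃ : Projectivization.map g.toLinearMap g.injective p₃ = p₃) :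
    ∃ c : Kˣ, ∀ w, g w = (c : K) • w := by
  obtain ⟨a₁, ha₁⟩ := eig_of_fixed g p₁ f₁
  obtain ⟨a₂, ha₂⟩ := eig_of_fixed g p₂ f₂
  obtain ⟨a₃, ha₃⟩ := eig_of_fixed g p₃ f₃
  set v₁ := p₁.rep with hv₁def
  set v₂ := p₂.rep with hv₂def
  set v₃ := p₃.rep with hv₃def
  have hli : LinearIndependent K ![v₁, v₂] := li_of_ne p₁ p₂ h12
  have hcard : Fintype.card (Fin 2) = finrank K (Fin 2 → K) := by simp
  let b := basisOfLinearIndependentOfCardEqFinrank hli hcard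
  have hb0 : b 0 = v₁ := by
    rw [show b = basisOfLinearIndependentOfCardEqFinrank hli hcard from rfl,
      coe_basisOfLinearIndependentOfCardEqFinrank]
    rfl
  have hb1 : b 1 = v₂ := by
    rw [show b = basisOfLinearIndependentOfCardEqFinrank hli hcard from rfl,
      coe_basisOfLinearIndependentOfCardEqFinrank]
    rfl
  have hrepr : ∀ w : Fin 2 → K, w = b.repr w 0 • v₁ + b.repr w 1 • v₂ := by
    intro w
    conv_lhs => rw [← b.sum_repr w]
    rw [Fin.sum_univ_two, hb0, hb1]
  set c₁ := b.repr v₃ 0 with hc₁def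
  set c₂ := b.repr v₃ 1 with hc₂def
  have hv₃ : v₃ = c₁ • v₁ + c₂ • v₂ := hrepr v₃
  have hc₁ : c₁ ≠ 0 := by
    intro h
    apply h23
    rw [← p₂.mk_rep, ← p₃.mk_rep]
    refine ((Projectivization.mk_eq_mk_iff' K _ _ p₃.rep_nonzero p₂.rep_nonzero).mpr ⟨c₂, ?_⟩).symm
    show c₂ • v₂ = v₃
    rw [hv₃, h, zero_smul, zero_add]
  have hc₂ : c₂ ≠ 0 := by
    intro h
    apply h13
    rw [← p₁.mk_rep, ← p₃.mk_rep]
    refine ((Projectivization.mk_eq_mk_iff' K _ _ p₃.rep_nonzero p₁.rep_nonzero).mpr ⟨c₁, ?_⟩).symm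
    show c₁ • v₁ = v₃
    rw [hv₃, h, zero_smul, add_zero]
  -- compute g v₃ two ways
  have key : (c₁ * (a₁ : K) - (a₃ : K) * c₁) • v₁ + (c₂ * (a₂ : K) - (a₃ : K) * c₂) • v₂ = 0 := by
    have e1 : g v₃ = (c₁ * (a₁ : K)) • v₁ + (c₂ * (a₂ : K)) • v₂ := by
      rw [hv₃, map_add, map_smul, map_smul, ← ha₁, ← ha₂, smul_smul, smul_smul]
    have e2 : g v₃ = ((a₃ : K) * c₁) • v₁ + ((a₃ : K) * c₂) • v₂ := by
      rw [← ha₃, hv₃, smul_add, smul_smul, smul_smul]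
    calc (c₁ * (a₁ : K) - (a₃ : K) * c₁) • v₁ + (c₂ * (a₂ : K) - (a₃ : K) * c₂) • v₂
        = ((c₁ * (a₁ : K)) • v₁ + (c₂ * (a₂ : K)) • v₂)
          - (((a₃ : K) * c₁) • v₁ + ((a₃ : K) * c₂) • v₂) := by module
      _ = 0 := by rw [← e1, ← e2, sub_self]
  obtain ⟨hs, ht⟩ := LinearIndependent.pair_iff.mp hli _ _ key
  have ha13 : (a₁ : K) = (a₃ : K) := by
    have := mul_eq_zero.mp (by linear_combination hs : c₁ * ((a₁ : K) - (a₃ : K)) = 0)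
    rcases this with h | h
    · exact absurd h hc₁
    · exact sub_eq_zero.mp h
  have ha23 : (a₂ : K) = (a₃ : K) := by
    have := mul_eq_zero.mp (by linear_combination ht : c₂ * ((a₂ : K) - (a₃ : K)) = 0)
    rcases this with h | h
    · exact absurd h hc₂
    · exact sub_eq_zero.mp h
  have ha21 : (a₂ : K) = (a₁ : K) := ha23.trans ha13.symm
  refine ⟨a₁, fun w => ?_⟩
  conv_lhs => rw [hrepr w]
  rw [map_add, map_smul, map_smul, ← ha₁, ← ha₂, ha21]
  conv_rhs => rw [hrepr w]
  module

end Scalar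


lemma three_distinct {X : Type*} {m : ℕ} (hm : 1 ≤ m) (v : Fin (2*m+1) → X)
    (hv : ∀ i, v i ≠ v (cycSucc i)) :
    ∃ i j k, v i ≠ v j ∧ v i ≠ v k ∧ v j ≠ v k := by
  have hn3 : 3 ≤ 2*m+1 := by omega
  have h0 : (0 : ℕ) < 2*m+1 := by omega
  have h1 : (1 : ℕ) < 2*m+1 := by omega
  have h01 : v ⟨0, h0⟩ ≠ v ⟨1, h1⟩ := by
    have := hv ⟨0, h0⟩
    rwa [cycSucc_of_lt _ (by simpa using h1)] at this
  by_contra hc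
  push_neg at hc
  have mem : ∀ i, v i = v ⟨0, h0⟩ ∨ v i = v ⟨1, h1⟩ := by
    intro i
    by_cases h : v i = v ⟨0, h0⟩
    · exact Or.inl h
    · exact Or.inr (hc ⟨0, h0⟩ ⟨1, h1⟩ i h01 (Ne.symm h)).symm
  have halt : ∀ a : ℕ, ∀ ha : a < 2*m+1,
      v ⟨a, ha⟩ = if a % 2 = 0 then v ⟨0, h0⟩ else v ⟨1, h1⟩ := by
    intro a
    induction a with
    | zero => intro ha; simp
    | succ a ih =>
      intro ha
      have ha' : a < 2*m+1 := by omega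
      have hne : v ⟨a, ha'⟩ ≠ v ⟨a+1, ha⟩ := by
        have := hv ⟨a, ha'⟩
        rwa [cycSucc_of_lt _ (by simpa using ha)] at this
      rw [ih ha'] at hne
      rcases mem ⟨a+1, ha⟩ with h | h
      · rcases Nat.even_or_odd a with he | ho
        · exfalso
          rw [if_pos (Nat.even_iff.mp he)] at hne
          exact hne h.symm
        · rw [h, if_pos (by rw [Nat.odd_iff] at ho; omega)]
      · rcases Nat.even_or_odd a with he | ho
        · rw [h, if_neg (by rw [Nat.even_iff] at he; omega)]
        · exfalso
          rw [if_neg (by rw [Nat.odd_iff] at ho; omega)] at hne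
          exact hne h.symm
  have hlast := halt (2*m) (by omega)
  rw [if_pos (by omega)] at hlast
  have := hv ⟨2*m, by omega⟩
  rw [cycSucc_of_eq _ rfl] at this
  exact this (by rw [hlast])

section Action
variable {K : Type*} [Field K]

noncomputable instance cycAction (n : ℕ) :
    MulAction ((Fin 2 → K) ≃ₗ[K] (Fin 2 → K)) ↥(cycConfig K n) where
  smul g x := ⟨fun i => Projectivization.map g.toLinearMap g.injective (x.1 i),
    fun i h => x.2 i (Projectivization.map_injective g.toLinearMap g.injective h)⟩
  one_smul x := by
    apply Subtype.ext
    funext i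
    exact congrFun Projectivization.map_id (x.1 i)
  mul_smul g h x := by
    apply Subtype.ext
    funext i
    exact congrFun (Projectivization.map_comp h.toLinearMap h.injective g.toLinearMap g.injective)
      (x.1 i)

lemma smul_coe {n : ℕ} (g : (Fin 2 → K) ≃ₗ[K] (Fin 2 → K)) (x : ↥(cycConfig K n)) (i : Fin n) :
    (g • x).1 i = Projectivization.map g.toLinearMap g.injective (x.1 i) := rfl

lemma map_smulOfUnit (c : Kˣ) (p : ℙ K (Fin 2 → K)) :
    Projectivization.map (LinearEquiv.smulOfUnit (M := Fin 2 → K) c).toLinearMap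
      (LinearEquiv.smulOfUnit c).injective p = p := by
  conv_lhs => rw [← p.mk_rep]
  rw [Projectivization.map_mk]
  conv_rhs => rw [← p.mk_rep]
  rw [Projectivization.mk_eq_mk_iff]
  exact ⟨c, rfl⟩

end Action

section Stab
variable {K : Type*} [Field K]

noncomputable def stabEquiv {m : ℕ} (hm : 1 ≤ m) (x : ↥(cycConfig K (2*m+1))) :
    Kˣ ≃ MulAction.stabilizer ((Fin 2 → K) ≃ₗ[K] (Fin 2 → K)) x := by
  refine Equiv.ofBijective (fun c => ⟨LinearEquiv.smulOfUnit c, ?_⟩) ⟨?_, ?_⟩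
  · show LinearEquiv.smulOfUnit c • x = x
    apply Subtype.ext
    funext i
    exact map_smulOfUnit c (x.1 i)
  · intro c c' h
    rw [Subtype.ext_iff] at h
    have h2 := congrFun (congrArg (fun (g : (Fin 2 → K) ≃ₗ[K] (Fin 2 → K)) =>
      g (fun _ => (1 : K))) h) 0
    have h3 : (c : K) * 1 = (c' : K) * 1 := h2
    exact Units.ext (by simpa using h3)
  · rintro ⟨g, hg⟩
    have hfix : ∀ i, Projectivization.map g.toLinearMap g.injective (x.1 i) = x.1 i := by
      intro i
      have : g • x = x := hg
      exact congrFun (congrArg Subtype.val this) i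
    obtain ⟨i, j, k, hij, hik, hjk⟩ := three_distinct hm x.1 x.2
    obtain ⟨c, hc⟩ := fixes_three_scalar g (x.1 i) (x.1 j) (x.1 k) hij hik hjk
      (hfix i) (hfix j) (hfix k)
    refine ⟨c, Subtype.ext ?_⟩
    apply LinearEquiv.toLinearMap_injective
    apply LinearMap.ext
    intro w
    exact (hc w).symm

end Stab


section OrbitCount
variable (K : Type*) [Field K] [Fintype K]

lemma orbit_count {m : ℕ} (hm : 1 ≤ m) :
    Nat.card (Quot (pglRel K (2*m+1))) *
        ((Fintype.card K ^ 2 - 1) * (Fintype.card K ^ 2 - Fintype.card K))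
      = Nat.card ↥(cycConfig K (2*m+1)) * (Fintype.card K - 1) := by
  haveI : Finite (ℙ K (Fin 2 → K)) := Quotient.finite _
  set G := (Fin 2 → K) ≃ₗ[K] (Fin 2 → K) with hG
  haveI hfinG : Finite G := by
    have e := (Matrix.GeneralLinearGroup.toLin (n := Fin 2) (R := K)).trans
      (LinearMap.GeneralLinearGroup.generalLinearEquiv K (Fin 2 → K))
    exact Finite.of_equiv _ e.toEquiv
  have hcardG : Nat.card G =
      (Fintype.card K ^ 2 - 1) * (Fintype.card K ^ 2 - Fintype.card K) := by
    have e := (Matrix.GeneralLinearGroup.toLin (n := Fin 2) (R := K)).trans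
      (LinearMap.GeneralLinearGroup.generalLinearEquiv K (Fin 2 → K))
    rw [← Nat.card_congr e.toEquiv, Matrix.card_GL_field, Fin.prod_univ_two]
    simp
  haveI : ∀ (p : Prop), Decidable p := Classical.propDecidable
  haveI : Fintype G := Fintype.ofFinite _
  haveI : Fintype ↥(cycConfig K (2*m+1)) := Fintype.ofFinite _
  set C := ↥(cycConfig K (2*m+1)) with hC
  set Ω := MulAction.orbitRel.Quotient G C with hΩ
  haveI : Fintype Ω := Fintype.ofFinite _
  have e1 : Quot (pglRel K (2*m+1)) ≃ Ω := by
    refine Quot.congrRight ?_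
    intro a b
    constructor
    · rintro ⟨g, hg⟩
      have hab : g • a = b := Subtype.ext (funext hg)
      show a ∈ MulAction.orbit G b
      exact MulAction.mem_orbit_iff.mpr ⟨g⁻¹, by rw [← hab, inv_smul_smul]⟩
    · intro h
      obtain ⟨g, hg⟩ := MulAction.mem_orbit_iff.mp (show a ∈ MulAction.orbit G b from h)
      refine ⟨g⁻¹, fun i => ?_⟩
      have : g⁻¹ • a = b := by rw [← hg, inv_smul_smul]
      exact congrFun (congrArg Subtype.val this) i
  have hsig := Fintype.card_congr (MulAction.selfEquivSigmaOrbits G C)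
  rw [Fintype.card_sigma] at hsig
  have horb : ∀ ω : Ω, Fintype.card (MulAction.orbit G (Quotient.out ω)) *
      (Fintype.card K - 1) = Fintype.card G := by
    intro ω
    have h1 := MulAction.card_orbit_mul_card_stabilizer_eq_card_group G (Quotient.out ω)
    have h2 : Fintype.card (MulAction.stabilizer G (Quotient.out ω)) = Fintype.card K - 1 := by
      rw [← Nat.card_eq_fintype_card, ← Nat.card_congr (stabEquiv hm (Quotient.out ω)),
        Nat.card_units, Nat.card_eq_fintype_card]
    rw [h2] at h1
    exact h1
  have key : Fintype.card C * (Fintype.card K - 1) = Fintype.card Ω * Fintype.card G := by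
    calc Fintype.card C * (Fintype.card K - 1)
        = (∑ ω : Ω, Fintype.card (MulAction.orbit G (Quotient.out ω))) * (Fintype.card K - 1) := by
          rw [hsig]
      _ = ∑ ω : Ω, Fintype.card (MulAction.orbit G (Quotient.out ω)) * (Fintype.card K - 1) :=
          Finset.sum_mul _ _ _
      _ = ∑ _ω : Ω, Fintype.card G := Finset.sum_congr rfl (fun ω _ => horb ω)
      _ = Fintype.card Ω * Fintype.card G := by rw [Finset.sum_const, Finset.card_univ, smul_eq_mul]
  rw [Nat.card_congr e1, Nat.card_eq_fintype_card, ← hcardG, Nat.card_eq_fintype_card,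
    Nat.card_eq_fintype_card]
  rw [key]

end OrbitCount

theorem card_orbits_cycConfig_odd (K : Type*) [Field K] [Fintype K]
    (hq : 3 ≤ Fintype.card K) (m : ℕ) (hm : 1 ≤ m) :
    Nat.card (Quot (pglRel K (2 * m + 1))) =
      ∑ i ∈ range m, Fintype.card K ^ (2 * i) := by
  classical
  set q := Fintype.card K with hq'
  haveI : Finite (ℙ K (Fin 2 → K)) := Quotient.finite _
  haveI : Fintype (ℙ K (Fin 2 → K)) := Fintype.ofFinite _
  have hP : Fintype.card (ℙ K (Fin 2 → K)) = q + 1 := by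
    rw [← Nat.card_eq_fintype_card, card_proj_line]
  have hC : (Nat.card ↥(cycConfig K (2*m+1)) : ℤ) = (q:ℤ)^(2*m+1) - q := by
    have h := cycCount_odd (ℙ K (Fin 2 → K)) (by rw [hP]; omega) m
    rw [hP] at h
    have hrfl : cycCount (ℙ K (Fin 2 → K)) (2*m+1) = Nat.card ↥(cycConfig K (2*m+1)) := rfl
    rw [hrfl] at h
    rw [h]
    push_cast
    ring
  have horb := orbit_count K (m := m) hm
  set N := Nat.card (Quot (pglRel K (2*m+1))) with hN
  have hq3 : 3 ≤ q := hq
  have hcast : (N : ℤ) * (((q:ℤ)^2 - 1) * ((q:ℤ)^2 - q)) = ((q:ℤ)^(2*m+1) - q) * ((q:ℤ) - 1) := by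
    have hcc := congrArg (Nat.cast : ℕ → ℤ) horb
    rw [← hq'] at hcc
    push_cast [Nat.cast_sub (show 1 ≤ q^2 by nlinarith), Nat.cast_sub (show q ≤ q^2 by nlinarith),
      Nat.cast_sub (show 1 ≤ q by omega)] at hcc
    rw [hC] at hcc
    exact hcc
  have hgeom : (∑ i ∈ range m, (q:ℤ)^(2*i)) * ((q:ℤ)^2 - 1) = (q:ℤ)^(2*m) - 1 := by
    have hg := geom_sum_mul ((q:ℤ)^2) m
    have hs : ∑ i ∈ range m, (q:ℤ)^(2*i) = ∑ i ∈ range m, ((q:ℤ)^2)^i :=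
      Finset.sum_congr rfl (fun i _ => by rw [← pow_mul])
    rw [hs, hg, ← pow_mul]
  have hA : ((q:ℤ)^2 - 1) * ((q:ℤ)^2 - q) ≠ 0 := by
    have h1 : (3:ℤ) ≤ (q:ℤ) := by exact_mod_cast hq3
    have h2 : (0:ℤ) < (q:ℤ)^2 - 1 := by nlinarith
    have h3 : (0:ℤ) < (q:ℤ)^2 - q := by nlinarith
    exact ne_of_gt (mul_pos h2 h3)
  have hfin : (N:ℤ) = ∑ i ∈ range m, (q:ℤ)^(2*i) := by
    apply mul_right_cancel₀ hA
    rw [hcast]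
    linear_combination (-((q:ℤ)^2 - (q:ℤ))) * hgeom
  have : (N:ℤ) = ((∑ i ∈ range m, q^(2*i) : ℕ) : ℤ) := by
    rw [hfin]
    push_cast
    rfl
  exact_mod_cast this
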